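/- Let H be a simple graph with n nodes and let r ≥ 3 be an integer such that H has no cycles of length at most r. Set r' = 2r if r is even and r' = 2r − 2 if r is odd. Then H has at most n⁴ cycles of length at most r' (cycles counted as subgraphs, i.e., up to choice of starting vertex and direction). -/

import Mathlib

namespace SimpleGraph
namespace Walk

variable {V : Type*} {G : SimpleGraph V}

private lemma end_mem_support_tail' {u v : V} (w : G.Walk u v) (h : ¬ w.Nil) :
    v ∈ w.support.tail := by
  cases w with
  | nil => simp at h
  | cons h' w' => simpa using w'.end_mem_support

private lemma exists_split' {u v : V} (w : G.Walk u v) : ∀ (i : ℕ), i ≤ w.length →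
    ∃ (w₁ : G.Walk u (w.getVert i)) (w₂ : G.Walk (w.getVert i) v),
      w = w₁.append w₂ ∧ w₁.length = i := by
  induction w with
  | nil =>
    intro i hi
    simp only [length_nil, Nat.le_zero] at hi
    subst hi
    exact ⟨nil, nil, rfl, rfl⟩
  | cons h w ih =>
    intro i hi
    match i with
    | 0 => exact ⟨nil, cons h w, rfl, rfl⟩
    | (i+1) =>
      obtain ⟨w₁, w₂, hw, hl⟩ := ih i (by simpa [length_cons] using hi)
      exact ⟨cons h w₁, w₂, by (conv_lhs => rw [hw]); exact (cons_append _ _ _).symm, by simp [hl]⟩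

/-- the first edge of a path starting at `u` is the only one containing `u`. -/
private lemma eq_getVert_one_of_mem_edges' {u v y : V} {w : G.Walk u v} (hw : w.IsPath)
    (he : s(u, y) ∈ w.edges) : y = w.getVert 1 := by
  cases w with
  | nil => simp at he
  | cons h w' =>
    rw [edges_cons, List.mem_cons] at he
    rcases he with he | he
    · rw [Sym2.eq_iff] at he
      rcases he with ⟨-, rfl⟩ | ⟨rfl, rfl⟩
      · simp [getVert_cons_succ, getVert_zero]
      · exact absurd rfl h.ne
    · exact absurd (fst_mem_support_of_mem_edges w' he) ((cons_isPath_iff _ _).mp hw).2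

private lemma getVert_one_prefix' {u v x : V} {s : G.Walk u x} {s₂ : G.Walk x v}
    (hs : ¬ s.Nil) : (s.append s₂).getVert 1 = s.getVert 1 := by
  rw [getVert_append]
  split_ifs with h
  · rfl
  · rw [nil_iff_length_eq] at hs
    have h1 : s.length = 1 := by omega
    rw [h1]
    simp only [Nat.sub_self, getVert_zero]
    conv_rhs => rw [← h1]
    rw [getVert_length]

/-- find the first vertex along a walk satisfying `P`. -/
private lemma exists_first_prefix' {u v : V} (w : G.Walk u v) (P : V → Prop) (hv : P v) :
    ∃ (x : V) (w₁ : G.Walk u x) (w₂ : G.Walk x v),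
      P x ∧ w = w₁.append w₂ ∧ ∀ y ∈ w₁.support, P y → y = x := by
  classical
  induction w with
  | nil => exact ⟨_, nil, nil, hv, rfl, by intro y hy _; simpa using hy⟩
  | @cons u a v h w' ih =>
    by_cases hPu : P u
    · exact ⟨u, nil, cons h w', hPu, rfl, by simp⟩
    · obtain ⟨x, w₁, w₂, hPx, hw, hmin⟩ := ih hv
      refine ⟨x, cons h w₁, w₂, hPx, by rw [cons_append, ← hw], ?_⟩
      intro y hy hPy
      rw [support_cons, List.mem_cons] at hy
      rcases hy with rfl | hy
      · exact absurd hPy hPu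
      · exact hmin y hy hPy

/-- Two distinct paths between the same pair of vertices produce a cycle whose length is
at most the sum of the lengths of the paths. -/
private lemma exists_cycle_of_two_paths' : ∀ (n : ℕ) {u v : V} (p q : G.Walk u v),
    p.length + q.length ≤ n → p.IsPath → q.IsPath → p ≠ q →
    ∃ (x : V) (c : G.Walk x x), c.IsCycle ∧ c.length ≤ p.length + q.length := by
  intro n
  induction n with
  | zero =>
    intro u v p q hn hp hq hne
    cases p with
    | nil =>
      cases q with
      | nil => exact absurd rfl hne
      | cons h q' => simp [length_cons] at hn
    | cons h p' => simp [length_cons] at hn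
  | succ n ih =>
    intro u v p q hn hp hq hne
    cases p with
    | nil => exact absurd (isPath_iff_eq_nil.mp hq).symm hne
    | @cons u a v hpa p' =>
      cases q with
      | nil => exact absurd (isPath_iff_eq_nil.mp hp) (by simp)
      | @cons u b v hqb q' =>
        by_cases hab : a = b
        · subst hab
          have hne' : p' ≠ q' := by rintro rfl; exact hne rfl
          obtain ⟨x, c, hc, hlen⟩ := ih p' q'
            (by simp only [length_cons] at hn; omega) hp.of_cons hq.of_cons hne'
          exact ⟨x, c, hc, by simp only [length_cons]; omega⟩
        · -- main construction
          have hp' : p'.IsPath := hp.of_cons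
          have hup' : u ∉ p'.support := ((cons_isPath_iff _ _).mp hp).2
          obtain ⟨x, t, t₂, hxq, hsplit, hmin⟩ :=
            exists_first_prefix' p' (· ∈ (cons hqb q').support) (end_mem_support _)
          have ht : t.IsPath := by
            rw [hsplit] at hp'; exact hp'.of_append_left
          have hxp' : x ∈ p'.support := by
            rw [hsplit, mem_support_append_iff]; exact Or.inl t.end_mem_support
          have hxu : x ≠ u := fun hxu => hup' (hxu ▸ hxp')
          obtain ⟨s, s₂, hsq⟩ := mem_support_iff_exists_append.mp hxq
          have hQ : (cons hqb q').IsPath := hq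
          have hs : s.IsPath := by
            rw [hsq] at hQ; exact hQ.of_append_left
          have hsnil : ¬ s.Nil := not_nil_of_ne (Ne.symm hxu)
          have hut : u ∉ t.support := fun h =>
            hup' (by rw [hsplit, mem_support_append_iff]; exact Or.inl h)
          have hsQ : s.support ⊆ (cons hqb q').support := fun y hy => by
            rw [hsq, mem_support_append_iff]; exact Or.inl hy
          -- the cycle
          refine ⟨u, (cons hpa t).append s.reverse, ?_, ?_⟩
          · rw [isCycle_def]
            refine ⟨?_, ?_, ?_⟩
            · -- trail
              rw [isTrail_def, cons_append, edges_cons, edges_append, edges_reverse]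
              rw [List.nodup_cons, List.nodup_append]
              refine ⟨?_, ht.isTrail.edges_nodup, List.nodup_reverse.mpr hs.isTrail.edges_nodup, ?_⟩
              · rw [List.mem_append, List.mem_reverse]
                rintro (he | he)
                · exact hut (fst_mem_support_of_mem_edges t he)
                · have h1 : a = s.getVert 1 := eq_getVert_one_of_mem_edges' hs he
                  have h2 : (cons hqb q').getVert 1 = s.getVert 1 := by
                    rw [hsq]; exact getVert_one_prefix' hsnil
                  have h3 : (cons hqb q').getVert 1 = b := by
                    rw [getVert_cons_succ, getVert_zero]
                  exact hab (by rw [h1, ← h2, h3])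
              · intro e het _ hes rfl
                rw [List.mem_reverse] at hes
                induction e with
                | h y z =>
                  have hy : y = x := hmin y (fst_mem_support_of_mem_edges t het)
                    (hsQ (fst_mem_support_of_mem_edges s hes))
                  have hz : z = x := hmin z (snd_mem_support_of_mem_edges t het)
                    (hsQ (snd_mem_support_of_mem_edges s hes))
                  have hadj : G.Adj y z := adj_of_mem_edges s hes
                  rw [hy, hz] at hadj
                  exact G.loopless.irrefl x hadj
            · -- nonempty
              rw [cons_append]; simp
            · -- support tail nodup
              rw [support_append, support_cons, List.cons_append, List.tail_cons]
              have hsr : s.reverse.IsPath := hs.reverse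
              have hsrn : (x :: s.reverse.support.tail).Nodup := by
                rw [← support_eq_cons]; exact hsr.support_nodup
              rw [List.nodup_cons] at hsrn
              rw [List.nodup_append]
              refine ⟨ht.support_nodup, hsrn.2, ?_⟩
              intro y hyt _ hys rfl
              have hyQ : y ∈ (cons hqb q').support := by
                apply hsQ
                have : y ∈ s.reverse.support := by
                  rw [support_eq_cons]; exact List.mem_cons_of_mem _ hys
                rwa [support_reverse, List.mem_reverse] at this
              exact hsrn.1 ((hmin y hyt hyQ) ▸ hys)
          · -- length
            have hlt : t.length ≤ p'.length := by
              have := congrArg Walk.length hsplit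
              rw [length_append] at this
              omega
            have hls : s.length ≤ (cons hqb q').length := by
              have := congrArg Walk.length hsq
              rw [length_append] at this
              omega
            rw [length_append, length_cons, length_reverse, length_cons]
            omega


private lemma path_eq_of_girth' {r : ℕ}
    (hgirth : ∀ (v : V) (c : G.Walk v v), c.IsCycle → r < c.length)
    {u v : V} {p q : G.Walk u v} (hp : p.IsPath) (hq : q.IsPath)
    (hlen : p.length + q.length ≤ r) : p = q := by
  by_contra hne
  obtain ⟨x, c, hc, hl⟩ := exists_cycle_of_two_paths' (p.length + q.length) p q le_rfl hp hq hne
  exact absurd (hgirth x c hc) (by omega)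

private lemma exists_arcs' {v : V} (k : ℕ) (hk : 1 ≤ k) (c : G.Walk v v) (hc : c.IsCycle)
    (hlow : 2*k < c.length) (hhigh : c.length ≤ 4*k) :
    ∃ (t₁ : G.Walk v (c.getVert k)) (t₂ : G.Walk (c.getVert k) (c.getVert (2*k)))
      (t₃ : G.Walk (c.getVert (2*k)) (c.getVert (min (3*k) c.length)))
      (t₄ : G.Walk (c.getVert (min (3*k) c.length)) v),
      c.edges = t₁.edges ++ (t₂.edges ++ (t₃.edges ++ t₄.edges)) ∧
      t₁.IsPath ∧ t₂.IsPath ∧ t₃.IsPath ∧ t₄.IsPath ∧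
      t₁.length ≤ k ∧ t₂.length ≤ k ∧ t₃.length ≤ k ∧ t₄.length ≤ k := by
  have hM1 : min (3*k) c.length ≤ 3*k := min_le_left _ _
  have hM2 : min (3*k) c.length ≤ c.length := min_le_right _ _
  have hM3 : c.length - k ≤ min (3*k) c.length := le_min (by omega) (by omega)
  have hM4 : 2*k ≤ min (3*k) c.length := le_min (by omega) (by omega)
  set M := min (3*k) c.length with hMdef
  obtain ⟨t₁, d₁, h₁, hl₁⟩ := exists_split' c k (by omega)
  have hlen₁ : t₁.length + d₁.length = c.length := by
    have := congrArg Walk.length h₁; rw [length_append] at this; omega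
  have ht₁nil : ¬ t₁.Nil := by rw [nil_iff_length_eq]; omega
  have hd₁nil : ¬ d₁.Nil := by rw [nil_iff_length_eq]; omega
  have hcyc : (t₁.append d₁).IsCycle := h₁ ▸ hc
  have hsupp : (t₁.append d₁).support.tail = t₁.support.tail ++ d₁.support.tail := by
    rw [support_append, support_eq_cons t₁]
    rfl
  have htail := hcyc.support_nodup
  rw [hsupp, List.nodup_append] at htail
  have ht₁ : t₁.IsPath := by
    rw [isPath_def, support_eq_cons t₁, List.nodup_cons]
    exact ⟨fun hv' => htail.2.2 _ hv' _ (end_mem_support_tail' d₁ hd₁nil) rfl, htail.1⟩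
  have hd₁ : d₁.IsPath := by
    rw [isPath_def, support_eq_cons d₁, List.nodup_cons]
    exact ⟨fun h => htail.2.2 _ (end_mem_support_tail' t₁ ht₁nil) _ h rfl, htail.2.1⟩
  have e₂ : c.getVert (2*k) = d₁.getVert k := by
    conv_lhs => rw [h₁]
    rw [getVert_append, hl₁, if_neg (by omega)]
    congr 1
    omega
  obtain ⟨t₂, d₂, h₂, hl₂⟩ := exists_split' d₁ k (by omega)
  have hlen₂ : t₂.length + d₂.length = d₁.length := by
    have := congrArg Walk.length h₂; rw [length_append] at this; omega
  have ht₂ : t₂.IsPath := by rw [h₂] at hd₁; exact hd₁.of_append_left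
  have hd₂ : d₂.IsPath := by rw [h₂] at hd₁; exact hd₁.of_append_right
  have e₃ : c.getVert M = d₂.getVert (M - 2*k) := by
    conv_lhs => rw [h₁]
    rw [getVert_append, hl₁, if_neg (by omega)]
    conv_lhs => rw [h₂]
    rw [getVert_append, hl₂, if_neg (by omega)]
    congr 1
    omega
  obtain ⟨t₃, t₄, h₃, hl₃⟩ := exists_split' d₂ (M - 2*k) (by omega)
  have hlen₃ : t₃.length + t₄.length = d₂.length := by
    have := congrArg Walk.length h₃; rw [length_append] at this; omega
  have ht₃ : t₃.IsPath := by rw [h₃] at hd₂; exact hd₂.of_append_left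
  have ht₄ : t₄.IsPath := by rw [h₃] at hd₂; exact hd₂.of_append_right
  refine ⟨t₁, t₂.copy rfl e₂.symm, t₃.copy e₂.symm e₃.symm, t₄.copy e₃.symm rfl,
    ?_, ht₁, by simpa using ht₂, by simpa using ht₃, by simpa using ht₄,
    by omega, by simp only [length_copy]; omega, by simp only [length_copy]; omega,
    by simp only [length_copy]; omega⟩
  conv_lhs => rw [h₁, h₂, h₃]
  simp [edges_append, List.append_assoc]

private lemma cycle_edges_eq' {r : ℕ}
    (hgirth : ∀ (v : V) (c : G.Walk v v), c.IsCycle → r < c.length)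
    (k : ℕ) (hk : 1 ≤ k) (h2k : 2*k ≤ r)
    {v v' : V} (hv : v = v') (c : G.Walk v v) (c' : G.Walk v' v')
    (hc : c.IsCycle) (hc' : c'.IsCycle)
    (hl : c.length ≤ 4*k) (hl' : c'.length ≤ 4*k)
    (h1 : c.getVert k = c'.getVert k)
    (h2 : c.getVert (2*k) = c'.getVert (2*k))
    (h3 : c.getVert (min (3*k) c.length) = c'.getVert (min (3*k) c'.length)) :
    c.edges = c'.edges := by
  subst hv
  have hlc : 2*k < c.length := lt_of_le_of_lt h2k (hgirth v c hc)
  have hlc' : 2*k < c'.length := lt_of_le_of_lt h2k (hgirth v c' hc')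
  obtain ⟨t₁, t₂, t₃, t₄, he, hp₁, hp₂, hp₃, hp₄, hq₁, hq₂, hq₃, hq₄⟩ :=
    exists_arcs' k hk c hc hlc hl
  obtain ⟨s₁, s₂, s₃, s₄, he', hp₁', hp₂', hp₃', hp₄', hq₁', hq₂', hq₃', hq₄'⟩ :=
    exists_arcs' k hk c' hc' hlc' hl'
  have E1 : t₁ = s₁.copy rfl h1.symm :=
    path_eq_of_girth' hgirth hp₁ (by simpa using hp₁') (by simp only [length_copy]; omega)
  have E2 : t₂ = (s₂.copy h1.symm h2.symm) :=
    path_eq_of_girth' hgirth hp₂ (by simpa using hp₂') (by simp only [length_copy]; omega)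
  have E3 : t₃ = (s₃.copy h2.symm h3.symm) :=
    path_eq_of_girth' hgirth hp₃ (by simpa using hp₃') (by simp only [length_copy]; omega)
  have E4 : t₄ = (s₄.copy h3.symm rfl) :=
    path_eq_of_girth' hgirth hp₄ (by simpa using hp₄') (by simp only [length_copy]; omega)
  rw [he, he', E1, E2, E3, E4]
  simp [edges_copy]

end Walk
end SimpleGraph

/-- Let `H` be a simple graph with `n` nodes and `r ≥ 3` an integer such that `H` has no
cycle of length at most `r`.  Set `r' = 2r` if `r` is even and `r' = 2r - 2` if `r` is
odd.  Then `H` has at most `n⁴` cycles of length at most `r'`, where cycles are counted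
as subgraphs (identified here by their edge sets, which determine a cycle up to choice
of starting vertex and direction). -/
theorem card_cycles_le_of_large_girth {V : Type*} [Fintype V] [DecidableEq V]
    (H : SimpleGraph V) (r : ℕ) (hr : 3 ≤ r)
    (hgirth : ∀ (v : V) (c : H.Walk v v), c.IsCycle → r < c.length) :
    Nat.card {S : Finset (Sym2 V) // ∃ (v : V) (c : H.Walk v v), c.IsCycle ∧
        c.length ≤ (if Even r then 2 * r else 2 * r - 2) ∧ S = c.edges.toFinset} ≤
      (Fintype.card V) ^ 4 := by
  classical
  set k := r / 2 with hkdef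
  have hk : 1 ≤ k := by omega
  have h2k : 2 * k ≤ r := by omega
  have hr' : (if Even r then 2 * r else 2 * r - 2) ≤ 4 * k := by
    rcases Nat.even_or_odd r with h | h
    · rw [if_pos h]
      obtain ⟨m, rfl⟩ := h
      omega
    · rw [if_neg (Nat.not_even_iff_odd.mpr h)]
      obtain ⟨m, rfl⟩ := h
      omega
  have hex : ∀ s : {S : Finset (Sym2 V) // ∃ (v : V) (c : H.Walk v v), c.IsCycle ∧
      c.length ≤ (if Even r then 2 * r else 2 * r - 2) ∧ S = c.edges.toFinset},
      ∃ (v : V) (c : H.Walk v v), c.IsCycle ∧ c.length ≤ 4 * k ∧ s.1 = c.edges.toFinset := by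
    rintro ⟨S, v, c, hcyc, hlen, hS⟩
    exact ⟨v, c, hcyc, hlen.trans hr', hS⟩
  choose f₀ f₁ hcyc hlen hS using hex
  set F : {S : Finset (Sym2 V) // ∃ (v : V) (c : H.Walk v v), c.IsCycle ∧
      c.length ≤ (if Even r then 2 * r else 2 * r - 2) ∧ S = c.edges.toFinset} →
      V × V × V × V := fun s =>
    (f₀ s, (f₁ s).getVert k, (f₁ s).getVert (2*k), (f₁ s).getVert (min (3*k) (f₁ s).length))
    with hF
  have hinj : Function.Injective F := by
    intro s s' h
    rw [hF, Prod.ext_iff, Prod.ext_iff, Prod.ext_iff] at h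
    obtain ⟨hv, h1, h2, h3⟩ := h
    apply Subtype.ext
    rw [hS s, hS s']
    exact congrArg List.toFinset
      (SimpleGraph.Walk.cycle_edges_eq' hgirth k hk h2k hv (f₁ s) (f₁ s')
        (hcyc s) (hcyc s') (hlen s) (hlen s') h1 h2 h3)
  calc Nat.card _ ≤ Nat.card (V × V × V × V) := Nat.card_le_card_of_injective F hinj
    _ = (Fintype.card V) ^ 4 := by
        rw [Nat.card_eq_fintype_card]
        simp only [Fintype.card_prod]
        ring
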